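/- Let a, b, z ∈ ℝ with (a, b, z) ≠ (0, 0, 0). Then the function t ↦ ψ(t, b, z) is differentiable at a with derivative a/√(a² + b² + z²) − 1, and this derivative lies in the closed interval [−2, 0]. By the symmetry of ψ in its first two arguments, the same holds for the partial derivative with respect to b. -/

import Mathlib

/-- The smooth Fischer–Burmeister function. -/
noncomputable def smoothFB (a b z : ℝ) : ℝ := Real.sqrt (a ^ 2 + b ^ 2 + z ^ 2) - a - b

lemma smoothFB_aux (a c : ℝ) (hc : 0 ≤ c) (hs : 0 < a ^ 2 + c) :
    HasDerivAt (fun t : ℝ => Real.sqrt (t ^ 2 + c)) (a / Real.sqrt (a ^ 2 + c)) a ∧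
      a / Real.sqrt (a ^ 2 + c) - 1 ∈ Set.Icc (-2 : ℝ) 0 := by
  have hsq : Real.sqrt (a ^ 2 + c) > 0 := Real.sqrt_pos.mpr hs
  have hsqs : Real.sqrt (a ^ 2 + c) ^ 2 = a ^ 2 + c := Real.sq_sqrt hs.le
  have h1 : HasDerivAt (fun t : ℝ => t ^ 2 + c) (2 * a) a := by
    simpa using (hasDerivAt_pow 2 a).add_const c
  have h2 := h1.sqrt (by positivity)
  constructor
  · convert h2 using 1
    field_simp
  · have habs : |a| ≤ Real.sqrt (a ^ 2 + c) := by
      rw [← Real.sqrt_sq_eq_abs]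
      exact Real.sqrt_le_sqrt (by linarith)
    have h3 : -Real.sqrt (a ^ 2 + c) ≤ a := (abs_le.mp habs).1.trans_eq' (by ring_nf) |>.trans_eq (rfl)
    have h4 : a ≤ Real.sqrt (a ^ 2 + c) := le_trans (le_abs_self a) habs
    constructor
    · have h5 : (-1:ℝ) ≤ a / Real.sqrt (a ^ 2 + c) := (le_div_iff₀ hsq).mpr (by linarith)
      linarith
    · have : a / Real.sqrt (a ^ 2 + c) ≤ 1 := (div_le_one hsq).mpr h4
      linarith

/-- The partial derivatives of the smooth Fischer–Burmeister function with
respect to its first two arguments exist away from the origin and lie in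
`[−2, 0]`. -/
theorem smoothFB_deriv_mem_Icc (a b z : ℝ) (h : ¬(a = 0 ∧ b = 0 ∧ z = 0)) :
    (HasDerivAt (fun t => smoothFB t b z)
        (a / Real.sqrt (a ^ 2 + b ^ 2 + z ^ 2) - 1) a ∧
      a / Real.sqrt (a ^ 2 + b ^ 2 + z ^ 2) - 1 ∈ Set.Icc (-2 : ℝ) 0) ∧
    (HasDerivAt (fun t => smoothFB a t z)
        (b / Real.sqrt (a ^ 2 + b ^ 2 + z ^ 2) - 1) b ∧
      b / Real.sqrt (a ^ 2 + b ^ 2 + z ^ 2) - 1 ∈ Set.Icc (-2 : ℝ) 0) := by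
  have hs : 0 < a ^ 2 + b ^ 2 + z ^ 2 := by
    rcases lt_or_eq_of_le (by positivity : (0:ℝ) ≤ a ^ 2 + b ^ 2 + z ^ 2) with h1 | h1
    · exact h1
    · exfalso; apply h
      refine ⟨?_, ?_, ?_⟩ <;> nlinarith [sq_nonneg a, sq_nonneg b, sq_nonneg z]
  constructor
  · obtain ⟨hd, hm⟩ := smoothFB_aux a (b ^ 2 + z ^ 2) (by positivity) (by linarith)
    have e : a ^ 2 + (b ^ 2 + z ^ 2) = a ^ 2 + b ^ 2 + z ^ 2 := by ring
    rw [e] at hd hm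
    refine ⟨?_, hm⟩
    have : HasDerivAt (fun t : ℝ => Real.sqrt (t ^ 2 + b ^ 2 + z ^ 2) - t - b)
        (a / Real.sqrt (a ^ 2 + b ^ 2 + z ^ 2) - 1) a := by
      have := (hd.sub (hasDerivAt_id a)).sub_const b
      simpa [add_assoc] using this
    exact this
  · obtain ⟨hd, hm⟩ := smoothFB_aux b (a ^ 2 + z ^ 2) (by positivity) (by linarith)
    have e : b ^ 2 + (a ^ 2 + z ^ 2) = a ^ 2 + b ^ 2 + z ^ 2 := by ring
    rw [e] at hd hm
    refine ⟨?_, hm⟩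
    have : HasDerivAt (fun t : ℝ => Real.sqrt (t ^ 2 + (a ^ 2 + z ^ 2)) - a - t)
        (b / Real.sqrt (a ^ 2 + b ^ 2 + z ^ 2) - 1) b := by
      exact (hd.sub_const a).sub (hasDerivAt_id' b)
    have e2 : (fun t : ℝ => smoothFB a t z)
        = fun t : ℝ => Real.sqrt (t ^ 2 + (a ^ 2 + z ^ 2)) - a - t := by
      funext t; simp [smoothFB]; ring_nf
    rw [e2]
    exact this
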